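/- Let $\ell \ge 3$ and $s_1 \le s_2 \le \dots \le s_\ell$ be positive integers. Let $H$ be a graph whose vertex set is partitioned as $A \sqcup B$ such that: $H[A]$ contains no copy of $K_\ell$ and no copy of the complete $(\ell-1)$-partite graph with all parts of size $s_1$; $H[B]$ is a disjoint union of cliques each of size at most $s_2$; and arbitrary edges may be present between $A$ and $B$. Then $H$ contains no copy of the complete $\ell$-partite graph $K_{s_1, \dots, s_\ell}$. -/

import Mathlib

def HasCopy {α β : Type*} (F : SimpleGraph α) (H : SimpleGraph β) : Prop :=
  ∃ f : α → β, Function.Injective f ∧ ∀ a b, F.Adj a b → H.Adj (f a) (f b)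

theorem stmt10 {W : Type*} (ℓ : ℕ) (hℓ : 3 ≤ ℓ) (s : Fin ℓ → ℕ)
    (hpos : ∀ i, 1 ≤ s i) (hmono : Monotone s)
    (H : SimpleGraph W) (A : Set W)
    (hKl : ¬ HasCopy (SimpleGraph.completeGraph (Fin ℓ)) (H.induce A))
    (hKmp : ¬ HasCopy (SimpleGraph.completeMultipartiteGraph (fun _ : Fin (ℓ - 1) => Fin (s ⟨0, by omega⟩)))
      (H.induce A))
    (hBclust : ∀ a b c, a ∉ A → b ∉ A → c ∉ A →
      H.Adj a b → H.Adj b c → a ≠ c → H.Adj a c)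
    (hBsize : ∀ t : Set W, t ⊆ Aᶜ → H.IsClique t → t.ncard ≤ s ⟨1, by omega⟩) :
    ¬ HasCopy (SimpleGraph.completeMultipartiteGraph (fun i => Fin (s i))) H := by
  classical
  rintro ⟨f, hf, hadj⟩
  have hadj' : ∀ v w : Σ i, Fin (s i), v.1 ≠ w.1 → H.Adj (f v) (f w) :=
    fun v w h => hadj v w h
  by_cases hall : ∀ i : Fin ℓ, ∃ x : Fin (s i), f ⟨i, x⟩ ∈ A
  · -- every part has a vertex in A : build K_ℓ in H[A]
    choose x hx using hall
    apply hKl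
    refine ⟨fun i => ⟨f ⟨i, x i⟩, hx i⟩, ?_, ?_⟩
    · intro i j hij
      have h' := hf (Subtype.ext_iff.mp hij)
      exact congrArg Sigma.fst h'
    · intro a b hab
      have : ((a : Fin ℓ) : Fin ℓ) ≠ b := by simpa using hab
      exact hadj ⟨a, x a⟩ ⟨b, x b⟩ this
  · push_neg at hall
    obtain ⟨i₀, hi₀⟩ := hall
    -- every other part has at least s 0 vertices in A
    have key : ∀ j : Fin ℓ, j ≠ i₀ →
        s ⟨0, by omega⟩ ≤
          (Finset.univ.filter (fun x : Fin (s j) => f ⟨j, x⟩ ∈ A)).card := by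
      intro j hj
      set Bf : Finset (Fin (s j)) :=
        Finset.univ.filter (fun x => f ⟨j, x⟩ ∉ A) with hBf
      have hsum : (Finset.univ.filter (fun x : Fin (s j) => f ⟨j, x⟩ ∈ A)).card
          + Bf.card = s j := by
        rw [hBf, Finset.card_filter_add_card_filter_not,
          Finset.card_univ, Fintype.card_fin]
      have h0j : s ⟨0, by omega⟩ ≤ s j := hmono (by simp [Fin.le_def])
      rcases Bf.eq_empty_or_nonempty with hB | hB
      · rw [hB] at hsum; simp at hsum; omega
      · obtain ⟨z, hz⟩ := hB
        have hzA : f ⟨j, z⟩ ∉ A := by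
          rw [hBf] at hz; exact (Finset.mem_filter.mp hz).2
        set T : Finset (Σ i, Fin (s i)) :=
          (Finset.univ.image (Sigma.mk i₀)) ∪ (Bf.image (Sigma.mk j)) with hT
        have hmemT : ∀ v ∈ T, v.1 = i₀ ∨ (v.1 = j ∧ f v ∉ A) := by
          intro v hv
          rw [hT, Finset.mem_union] at hv
          rcases hv with hv | hv
          · obtain ⟨y, _, rfl⟩ := Finset.mem_image.mp hv
            exact Or.inl rfl
          · obtain ⟨y, hy, rfl⟩ := Finset.mem_image.mp hv
            rw [hBf] at hy
            exact Or.inr ⟨rfl, (Finset.mem_filter.mp hy).2⟩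
        have hnotA : ∀ v ∈ T, f v ∉ A := by
          intro v hv
          rcases hmemT v hv with h1 | h1
          · obtain ⟨i, y⟩ := v
            cases h1
            exact hi₀ y
          · exact h1.2
        have hTcard : T.card = s i₀ + Bf.card := by
          rw [hT, Finset.card_union_of_disjoint, Finset.card_image_of_injective _ sigma_mk_injective,
            Finset.card_image_of_injective _ sigma_mk_injective, Finset.card_univ, Fintype.card_fin]
          · rw [Finset.disjoint_left]
            rintro v hv1 hv2
            obtain ⟨y, _, rfl⟩ := Finset.mem_image.mp hv1
            obtain ⟨y', _, h⟩ := Finset.mem_image.mp hv2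
            exact hj (congrArg Sigma.fst h)
        have hclique : H.IsClique ↑(T.image f) := by
          intro a ha b hb hab
          simp only [Finset.coe_image, Set.mem_image, Finset.mem_coe] at ha hb
          obtain ⟨v, hv, rfl⟩ := ha
          obtain ⟨w, hw, rfl⟩ := hb
          rcases hmemT v hv with h1 | h1 <;> rcases hmemT w hw with h2 | h2
          · -- both in part i₀ : go through f ⟨j, z⟩
            refine hBclust _ (f ⟨j, z⟩) _ (hnotA v hv) hzA (hnotA w hw) ?_ ?_ hab
            · exact hadj' v ⟨j, z⟩ (by rw [h1]; exact fun hc => hj hc.symm)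
            · exact hadj' ⟨j, z⟩ w (by rw [h2]; exact hj)
          · exact hadj' v w (by rw [h1, h2.1]; exact fun hc => hj hc.symm)
          · exact hadj' v w (by rw [h1.1, h2]; exact hj)
          · -- both in part j : go through a vertex of part i₀
            have x0 : Fin (s i₀) := ⟨0, hpos i₀⟩
            refine hBclust _ (f ⟨i₀, x0⟩) _ (hnotA v hv) (hi₀ x0) (hnotA w hw) ?_ ?_ hab
            · exact hadj' v ⟨i₀, x0⟩ (by rw [h1.1]; exact hj)
            · exact hadj' ⟨i₀, x0⟩ w (by rw [h2.1]; exact fun hc => hj hc.symm)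
        have hsub : ↑(T.image f) ⊆ Aᶜ := by
          intro a ha
          simp only [Finset.coe_image, Set.mem_image, Finset.mem_coe] at ha
          obtain ⟨v, hv, rfl⟩ := ha
          exact hnotA v hv
        have hb := hBsize _ hsub hclique
        rw [Set.ncard_coe_finset, Finset.card_image_of_injective _ hf, hTcard] at hb
        -- hb : s i₀ + Bf.card ≤ s ⟨1, _⟩
        -- split on whether i₀ < j or j < i₀
        rcases lt_or_gt_of_ne hj with hlt | hlt
        · -- j < i₀, so s i₀ ≥ s ⟨1,_⟩
          have h1 : s ⟨1, by omega⟩ ≤ s i₀ :=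
            hmono (by rw [Fin.le_def]; simp; omega)
          omega
        · -- i₀ < j, so s j ≥ s ⟨1,_⟩ and s i₀ ≥ s ⟨0,_⟩
          have h1 : s ⟨1, by omega⟩ ≤ s j := by
            refine hmono ?_
            rw [Fin.le_def]
            have : (i₀ : ℕ) < (j : ℕ) := hlt
            simp; omega
          have h2 : s ⟨0, by omega⟩ ≤ s i₀ := hmono (by simp [Fin.le_def])
          omega
    -- construct the injection avoiding i₀
    set e : Fin (ℓ - 1) → Fin ℓ :=
      fun k => if (k : ℕ) < (i₀ : ℕ) then ⟨k, by omega⟩ else ⟨k + 1, by omega⟩ with he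
    have he_ne : ∀ k, e k ≠ i₀ := by
      intro k hc
      rw [he] at hc
      simp only at hc
      split_ifs at hc with h <;> rw [Fin.ext_iff] at hc <;> simp at hc <;> omega
    have he_inj : Function.Injective e := by
      intro k k' hc
      rw [he] at hc
      simp only at hc
      rw [Fin.ext_iff]
      split_ifs at hc with h1 h2 h2 <;> rw [Fin.ext_iff] at hc <;> simp at hc <;> omega
    have hu : ∀ k : Fin (ℓ - 1), ∃ u : Fin (s ⟨0, by omega⟩) → Fin (s (e k)),
        Function.Injective u ∧ ∀ x, f ⟨e k, u x⟩ ∈ A := by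
      intro k
      have hc : Fintype.card (Fin (s ⟨0, by omega⟩)) ≤
          Fintype.card {x : Fin (s (e k)) // f ⟨e k, x⟩ ∈ A} := by
        rw [Fintype.card_fin, Fintype.card_subtype]
        exact key (e k) (he_ne k)
      obtain ⟨u⟩ := Function.Embedding.nonempty_of_card_le hc
      exact ⟨fun x => (u x).1, fun a b hab => u.injective (Subtype.ext hab),
        fun x => (u x).2⟩
    choose u huinj huA using hu
    apply hKmp
    refine ⟨fun v => ⟨f ⟨e v.1, u v.1 v.2⟩, huA v.1 v.2⟩, ?_, ?_⟩
    · rintro ⟨k, x⟩ ⟨k', x'⟩ h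
      have h' := hf (Subtype.ext_iff.mp h)
      have hk : e k = e k' := congrArg Sigma.fst h'
      have hkk : k = k' := he_inj hk
      subst hkk
      have hux : u k x = u k x' := eq_of_heq (Sigma.mk.inj_iff.mp h').2
      rw [huinj k hux]
    · rintro ⟨k, x⟩ ⟨k', x'⟩ hkk'
      have : k ≠ k' := hkk'
      exact hadj ⟨e k, u k x⟩ ⟨e k', u k' x'⟩ (fun hc => this (he_inj hc))
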